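/- arXiv:1112.3441 — 11 statements merged into one kernel-verified Lean document; each statement's English description precedes it below -/
import Mathlib

section
/- The polynomial q = x² + y² + z² − xyz − 4 is irreducible in the polynomial ring ℂ[x,y,z]. -/
open MvPolynomial

noncomputable section

namespace QIrr

abbrev A := MvPolynomial (Fin 2) ℂ

lemma prime_u : Prime (X 0 - 2 : A) := by
  rw [← MulEquiv.prime_iff (finSuccEquiv ℂ 1)]
  show Prime ((finSuccEquiv ℂ 1) (X 0 - 2 : A))
  have : (finSuccEquiv ℂ 1) (X 0 - 2 : A) = Polynomial.X - Polynomial.C 2 := by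
    rw [map_sub, finSuccEquiv_X_zero, map_ofNat]
    rw [(map_ofNat Polynomial.C 2).symm]
  rw [this]
  exact Polynomial.prime_X_sub_C 2

/-- coefficient 1 of shifted polynomial -/
def b : A := 2 * X 1 - X 0 * X 1
def c : A := 2 * (X 1)^2 + (X 0)^2 - X 0 * (X 1)^2 - 4
def s : A := X 0 + 2 - (X 1)^2

def p : Polynomial A := Polynomial.C 1 * Polynomial.X^2 + Polynomial.C b * Polynomial.X + Polynomial.C c

lemma p_monic : p.Monic := by
  unfold p
  unfold Polynomial.Monic
  rw [Polynomial.leadingCoeff_quadratic one_ne_zero]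

lemma p_natDegree : p.natDegree = 2 := Polynomial.natDegree_quadratic one_ne_zero

lemma p_irred : Irreducible p := by
  set P : Ideal A := Ideal.span {X 0 - 2} with hP
  have hprime : P.IsPrime := (Ideal.span_singleton_prime (prime_u.ne_zero)).2 prime_u
  have hb : b ∈ P := Ideal.mem_span_singleton.2 ⟨-X 1, by unfold b; ring⟩
  have hc : c ∈ P := Ideal.mem_span_singleton.2 ⟨s, by unfold c s; ring⟩
  have heis : p.IsEisensteinAt P := by
    constructor
    · rw [p_monic.leadingCoeff]
      intro h
      exact hprime.ne_top (Ideal.eq_top_iff_one P |>.2 h)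
    · intro n hn
      rw [p_natDegree] at hn
      interval_cases n <;>
        simp [p, Polynomial.coeff_add, Polynomial.coeff_C_mul, Polynomial.coeff_X_pow,
          Polynomial.coeff_C, hb, hc, P.zero_mem]
    · rw [show p.coeff 0 = c by simp [p, Polynomial.coeff_C]]
      rw [hP, Ideal.span_singleton_pow, Ideal.mem_span_singleton]
      rintro ⟨t, ht⟩
      have hcs : c = (X 0 - 2) * s := by unfold c s; ring
      have h1 : (X 0 - 2) * s = (X 0 - 2) * ((X 0 - 2) * t) := by
        rw [← hcs, ht]; ring
      have h2 : s = (X 0 - 2) * t := mul_left_cancel₀ prime_u.ne_zero h1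
      have := congrArg (eval (fun i => if i = 0 then (2:ℂ) else 0)) h2
      simp [s, eval_X, eval_sub, eval_add, eval_pow, eval_mul] at this
  exact heis.irreducible hprime p_monic.isPrimitive (by rw [p_natDegree]; norm_num)

def tau : Polynomial A ≃ₐ[A] Polynomial A := Polynomial.algEquivAevalXAddC (-(X 1) : A)

lemma key : (finSuccEquiv ℂ 2) ((X 0) ^ 2 + (X 1) ^ 2 + (X 2) ^ 2 - X 0 * X 1 * X 2 - 4 :
      MvPolynomial (Fin 3) ℂ) = tau p := by
  have h1 : (X 1 : MvPolynomial (Fin 3) ℂ) = X (Fin.succ 0) := rfl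
  have h2 : (X 2 : MvPolynomial (Fin 3) ℂ) = X (Fin.succ 1) := rfl
  rw [h1, h2]
  rw [map_sub, map_sub, map_add, map_add, map_pow, map_pow, map_pow, map_mul, map_mul,
    finSuccEquiv_X_zero, finSuccEquiv_X_succ, finSuccEquiv_X_succ, map_ofNat]
  unfold tau p b c
  simp only [Polynomial.algEquivAevalXAddC_apply, map_add, map_mul, map_pow, map_sub, map_neg, map_one,
    Polynomial.aeval_X, Polynomial.aeval_C, Polynomial.algebraMap_apply, Algebra.algebraMap_self,
    RingHom.id_apply, map_ofNat]
  ring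

end QIrr

/-- The polynomial `q = x² + y² + z² − xyz − 4` is irreducible in `ℂ[x,y,z]`. -/
theorem q_irreducible :
    Irreducible ((X 0) ^ 2 + (X 1) ^ 2 + (X 2) ^ 2 - X 0 * X 1 * X 2 - 4 :
      MvPolynomial (Fin 3) ℂ) := by
  have h1 : Irreducible (QIrr.tau QIrr.p) :=
    (MulEquiv.irreducible_iff QIrr.tau).mpr QIrr.p_irred
  rw [← QIrr.key] at h1
  exact (MulEquiv.irreducible_iff (finSuccEquiv ℂ 2)).mp h1
end
end

section
/- The polynomial p₀ = z³ − xyz² + (x² + y² − 2)z − xy is irreducible in the polynomial ring ℂ[x,y,z]. -/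
open MvPolynomial

private lemma lemB' (a : MvPolynomial (Fin 1) ℂ) : a ^ 2 + (X 0) ^ 2 - 2 ≠ 0 := by
  intro h
  set c : ℂ := ((Real.sqrt 2 : ℝ) : ℂ) with hc
  have hc2 : c ^ 2 = 2 := by
    rw [hc, ← Complex.ofReal_pow, Real.sq_sqrt (by norm_num : (0:ℝ) ≤ 2)]
    norm_num
  have hc0 : c ≠ 0 := by
    intro h0; rw [h0] at hc2; norm_num at hc2
  have heva : (aeval (fun _ : Fin 1 => c)) a = 0 := by
    have h1 := congrArg (aeval (fun _ : Fin 1 => c)) h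
    simp only [map_add, map_sub, map_pow, aeval_X, map_ofNat, map_zero, hc2] at h1
    have h2 : (aeval (fun _ : Fin 1 => c)) a ^ 2 = 0 := by linear_combination h1
    exact pow_eq_zero_iff (two_ne_zero).elim |>.mp h2
  have hder := congrArg (pderiv 0) h
  have p2 : (pderiv (R := ℂ) (0 : Fin 1)) 2 = 0 := by
    rw [← map_ofNat (C : ℂ →+* MvPolynomial (Fin 1) ℂ) 2]; exact pderiv_C
  simp only [map_add, map_sub, pderiv_pow, pderiv_X_self, p2, map_zero, pow_one,
    Nat.cast_ofNat, mul_one, sub_zero] at hder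
  norm_num at hder
  have h2 := congrArg (aeval (fun _ : Fin 1 => c)) hder
  simp only [map_add, map_mul, aeval_X, map_zero, map_ofNat, heva, mul_zero] at h2
  norm_num at h2
  exact hc0 h2

private lemma lemC' (v : MvPolynomial (Fin 1) ℂ) : ((X 0) ^ 2 - 2) * v - X 0 ≠ 0 := by
  intro h
  set c : ℂ := ((Real.sqrt 2 : ℝ) : ℂ) with hc
  have hc2 : c ^ 2 = 2 := by
    rw [hc, ← Complex.ofReal_pow, Real.sq_sqrt (by norm_num : (0:ℝ) ≤ 2)]
    norm_num
  have hc0 : c ≠ 0 := by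
    intro h0; rw [h0] at hc2; norm_num at hc2
  have h1 := congrArg (aeval (fun _ : Fin 1 => c)) h
  simp only [map_sub, map_mul, map_pow, aeval_X, map_ofNat, map_zero, hc2] at h1
  simp at h1
  exact hc0 h1

private noncomputable def q0 : Polynomial (MvPolynomial (Fin 2) ℂ) :=
  Polynomial.X ^ 3 - Polynomial.C (X 0 * X 1) * Polynomial.X ^ 2 +
    Polynomial.C ((X 0) ^ 2 + (X 1) ^ 2 - 2) * Polynomial.X - Polynomial.C (X 0 * X 1)

private noncomputable def e0 : MvPolynomial (Fin 3) ℂ ≃ₐ[ℂ] Polynomial (MvPolynomial (Fin 2) ℂ) :=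
  (renameEquiv ℂ (Equiv.swap (0:Fin 3) 2)).trans (MvPolynomial.finSuccEquiv ℂ 2)

private lemma q0_irred : Irreducible q0 := by
  have hmon : q0.Monic := by unfold q0; monicity!
  have hdeg : q0.natDegree = 3 := by unfold q0; compute_degree!
  rw [hmon.irreducible_iff_roots_eq_zero_of_degree_le_three
    (by rw [hdeg]; norm_num) (by rw [hdeg])]
  rw [Multiset.eq_zero_iff_forall_notMem]
  intro r hr
  rw [Polynomial.mem_roots hmon.ne_zero] at hr
  have E : r ^ 3 - (X 0 * X 1) * r ^ 2 + ((X 0) ^ 2 + (X 1) ^ 2 - 2) * r - X 0 * X 1 = 0 := by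
    simpa [q0, Polynomial.IsRoot] using hr
  -- move to Polynomial (MvPolynomial (Fin 1) ℂ)
  have E2 := congrArg (MvPolynomial.finSuccEquiv ℂ 1) E
  have h1 : (1 : Fin 2) = Fin.succ 0 := rfl
  simp only [map_add, map_sub, map_mul, map_pow, map_ofNat, map_zero, h1,
    finSuccEquiv_X_zero, finSuccEquiv_X_succ] at E2
  set u := (MvPolynomial.finSuccEquiv ℂ 1) r with hu
  -- evaluate at 0
  have E3 := congrArg (Polynomial.eval 0) E2
  simp only [Polynomial.eval_add, Polynomial.eval_sub, Polynomial.eval_mul, Polynomial.eval_pow,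
    Polynomial.eval_X, Polynomial.eval_C, Polynomial.eval_ofNat, Polynomial.eval_zero,
    mul_zero, zero_mul] at E3
  set a := Polynomial.eval 0 u with ha
  have E3' : a * (a ^ 2 + (X 0) ^ 2 - 2) = 0 := by linear_combination E3
  rcases mul_eq_zero.mp E3' with h0 | h0
  · -- u has zero constant term
    have hdvd : Polynomial.X ∣ u := Polynomial.X_dvd_iff.mpr
      (by rw [Polynomial.coeff_zero_eq_eval_zero]; exact h0)
    obtain ⟨v, hv⟩ := hdvd
    rw [hv] at E2
    have E4 : Polynomial.X * (Polynomial.X ^ 2 * v ^ 3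
        - Polynomial.C (X 0) * Polynomial.X ^ 2 * v ^ 2
        + (Polynomial.X ^ 2 + Polynomial.C (X 0) ^ 2 - 2) * v - Polynomial.C (X 0)) = 0 := by
      linear_combination E2
    have E5 : Polynomial.X ^ 2 * v ^ 3
        - Polynomial.C (X 0) * Polynomial.X ^ 2 * v ^ 2
        + (Polynomial.X ^ 2 + Polynomial.C (X 0) ^ 2 - 2) * v - Polynomial.C (X 0) = 0 :=
      (mul_eq_zero.mp E4).resolve_left Polynomial.X_ne_zero
    have E6 := congrArg (Polynomial.eval 0) E5
    simp only [Polynomial.eval_add, Polynomial.eval_sub, Polynomial.eval_mul, Polynomial.eval_pow,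
      Polynomial.eval_X, Polynomial.eval_C, Polynomial.eval_ofNat, Polynomial.eval_zero,
      mul_zero, zero_mul] at E6
    exact lemC' (Polynomial.eval 0 v) (by linear_combination E6)
  · exact lemB' a h0

/-- The polynomial `p₀ = z³ − xyz² + (x² + y² − 2)z − xy` is irreducible in `ℂ[x,y,z]`. -/
theorem p0_irreducible :
    Irreducible ((X 2) ^ 3 - X 0 * X 1 * (X 2) ^ 2 +
      ((X 0) ^ 2 + (X 1) ^ 2 - 2) * X 2 - X 0 * X 1 :
      MvPolynomial (Fin 3) ℂ) := by
  rw [← MulEquiv.irreducible_iff e0]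
  have hep : e0 ((X 2) ^ 3 - X 0 * X 1 * (X 2) ^ 2 +
      ((X 0) ^ 2 + (X 1) ^ 2 - 2) * X 2 - X 0 * X 1 :
      MvPolynomial (Fin 3) ℂ) = q0 := by
    have hs0 : Equiv.swap (0 : Fin 3) 2 0 = Fin.succ 1 := by decide
    have hs1 : Equiv.swap (0 : Fin 3) 2 1 = Fin.succ 0 := by decide
    have hs2 : Equiv.swap (0 : Fin 3) 2 2 = 0 := by decide
    simp only [e0, q0, AlgEquiv.trans_apply, map_sub, map_add, map_mul, map_pow, map_ofNat,
      renameEquiv_apply, rename_X, hs0, hs1, hs2, finSuccEquiv_X_zero, finSuccEquiv_X_succ]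
    ring
  rw [hep]
  exact q0_irred
end

section
/- The polynomial p₁ = z⁴ − xyz³ + (x² + y² − 3)z² − xyz + 1 is irreducible in the polynomial ring ℂ[x,y,z]. -/
section Aux
open Polynomial


open Polynomial

noncomputable section

def rr : ℂ := ((Real.sqrt ((3 + Real.sqrt 5)/2) : ℝ) : ℂ)

lemma sqrt5_sq : (Real.sqrt 5) ^ 2 = 5 := Real.sq_sqrt (by norm_num)

lemma rr_sq : rr ^ 2 = (((3 + Real.sqrt 5)/2 : ℝ) : ℂ) := by
  rw [rr, ← Complex.ofReal_pow, Real.sq_sqrt]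
  positivity

lemma rr_quartic : rr ^ 4 - 3 * rr ^ 2 + 1 = 0 := by
  have h : rr ^ 4 = (rr ^ 2) ^ 2 := by ring
  rw [h, rr_sq]
  have h5 : ((Real.sqrt 5 : ℝ) : ℂ) ^ 2 = 5 := by exact_mod_cast congrArg (Complex.ofReal) sqrt5_sq
  push_cast
  linear_combination (1/4 : ℂ) * h5

lemma rr_ne : rr ≠ 0 := by
  intro h
  have := rr_quartic
  rw [h] at this
  norm_num at this

lemma rr_two : 2 * rr ^ 2 - 3 ≠ 0 := by
  rw [rr_sq]
  push_cast
  intro h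
  have h5 : ((Real.sqrt 5 : ℝ) : ℂ) = 0 := by linear_combination h
  rw [Complex.ofReal_eq_zero] at h5
  nlinarith [sqrt5_sq]

def hp : (ℂ[X])[X] := C (X^2 : ℂ[X]) * X^2 + C (X^4 - 3*X^2 + 1 : ℂ[X])

lemma X2ne : (X^2 : ℂ[X]) ≠ 0 := pow_ne_zero 2 X_ne_zero

lemma hp_natDegree : hp.natDegree = 2 := by
  unfold hp
  compute_degree!

lemma hp_coeff0 : hp.coeff 0 = X^4 - 3*X^2 + 1 := by
  unfold hp; simp only [coeff_add, coeff_C_mul, coeff_X_pow, coeff_C]; norm_num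

lemma hp_coeff1 : hp.coeff 1 = 0 := by
  unfold hp; simp only [coeff_add, coeff_C_mul, coeff_X_pow, coeff_C]; norm_num

lemma hp_coeff2 : hp.coeff 2 = X^2 := by
  unfold hp; simp only [coeff_add, coeff_C_mul, coeff_X_pow, coeff_C]; norm_num

lemma cfact : (X^4 - 3*X^2 + 1 : ℂ[X]) =
    (X - C rr) * (X^3 + C rr * X^2 + ((C rr)^2 - 3) * X + ((C rr)^3 - 3 * C rr)) := by
  have h4 : (C rr : ℂ[X])^4 - 3*(C rr)^2 + 1 = 0 := by
    have := congrArg (C : ℂ →+* ℂ[X]) rr_quartic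
    simp only [map_add, map_sub, map_mul, map_pow, map_one, map_zero, map_ofNat] at this
    exact this
  linear_combination h4

lemma dvd_c : (X - C rr) ∣ (X^4 - 3*X^2 + 1 : ℂ[X]) := ⟨_, cfact⟩

lemma not_dvd_d : ¬ (X - C rr) ∣ (X^3 + C rr * X^2 + ((C rr)^2 - 3) * X + ((C rr)^3 - 3 * C rr) : ℂ[X]) := by
  rw [dvd_iff_isRoot]
  intro h
  rw [IsRoot] at h
  simp only [eval_add, eval_mul, eval_pow, eval_X, eval_C, eval_sub, eval_ofNat] at h
  have h' : 2 * rr * (2 * rr ^ 2 - 3) = 0 := by linear_combination h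
  rcases mul_eq_zero.mp h' with h1 | h2
  · rcases mul_eq_zero.mp h1 with h0 | h0
    · norm_num at h0
    · exact rr_ne h0
  · exact rr_two h2

lemma hp_primitive : hp.IsPrimitive := by
  intro u hu
  obtain ⟨q, hq⟩ := hu
  have h2 : (X^2 : ℂ[X]) = u * q.coeff 2 := by
    rw [← hp_coeff2, hq, coeff_C_mul]
  have h0 : (X^4 - 3*X^2 + 1 : ℂ[X]) = u * q.coeff 0 := by
    rw [← hp_coeff0, hq, coeff_C_mul]
  have hdvd : u ∣ (1 : ℂ[X]) := by
    have : (1 : ℂ[X]) = u * (q.coeff 0 - (X^2 - 3) * q.coeff 2) := by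
      have := h0
      have := h2
      linear_combination h0 - (X^2 - 3 : ℂ[X]) * h2
    exact ⟨_, this⟩
  exact isUnit_of_dvd_one hdvd

lemma hp_irred : Irreducible hp := by
  have hprime : Prime (X - C rr : ℂ[X]) := prime_X_sub_C rr
  have hE : hp.IsEisensteinAt (Ideal.span {(X - C rr : ℂ[X])}) := by
    constructor
    · rw [leadingCoeff, hp_natDegree, hp_coeff2, Ideal.mem_span_singleton, dvd_iff_isRoot]
      simp only [IsRoot, eval_pow, eval_X]
      exact fun h => rr_ne (pow_eq_zero_iff (by norm_num) |>.mp h)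
    · intro n hn
      rw [hp_natDegree] at hn
      interval_cases n
      · rw [hp_coeff0, Ideal.mem_span_singleton]
        exact dvd_c
      · rw [hp_coeff1]
        exact Ideal.zero_mem _
    · rw [hp_coeff0, Ideal.span_singleton_pow, Ideal.mem_span_singleton]
      intro hdvd
      have hne : (X - C rr : ℂ[X]) ≠ 0 := X_sub_C_ne_zero rr
      rw [cfact, pow_two] at hdvd
      exact not_dvd_d ((mul_dvd_mul_iff_left hne).mp hdvd)
  exact hE.irreducible (Ideal.span_singleton_prime (X_sub_C_ne_zero rr) |>.mpr hprime)
    hp_primitive (by rw [hp_natDegree]; norm_num)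

def inn : ℂ[X] →+* (ℂ[X])[X] := eval₂RingHom ((C : ℂ[X] →+* (ℂ[X])[X]).comp (C : ℂ →+* ℂ[X])) X

def sw : (ℂ[X])[X] →+* (ℂ[X])[X] := eval₂RingHom inn (C X)

lemma sw_C_C (a : ℂ) : sw (C (C a)) = C (C a) := by
  simp [sw, inn]

lemma sw_C_X : sw (C (X : ℂ[X])) = X := by
  simp [sw, inn]

lemma sw_X : sw X = C X := by
  simp [sw]

lemma sw_sw : sw.comp sw = RingHom.id _ := by
  apply Polynomial.ringHom_ext'
  · apply Polynomial.ringHom_ext'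
    · ext a
      simp [sw_C_C]
    · simp [sw_C_X, sw_X]
  · simp [sw_X, sw_C_X]

def swE : (ℂ[X])[X] ≃+* (ℂ[X])[X] := RingEquiv.ofRingHom sw sw sw_sw sw_sw

def gpoly : (ℂ[X])[X] := X^4 + ((C (X : ℂ[X]))^2 - 3) * X^2 + 1

lemma hp_eq : hp = (C (X : ℂ[X]))^2 * X^2 + ((C (X : ℂ[X]))^4 - 3*(C (X : ℂ[X]))^2 + 1) := by
  unfold hp
  simp only [map_pow, map_sub, map_add, map_mul, map_one, map_ofNat]

lemma sw_g : swE gpoly = hp := by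
  show sw gpoly = hp
  unfold gpoly
  rw [hp_eq]
  simp only [map_add, map_mul, map_pow, map_sub, map_one, map_ofNat, sw_X, sw_C_X]
  ring

lemma g_irred : Irreducible gpoly := by
  rw [← MulEquiv.irreducible_iff swE, sw_g]
  exact hp_irred

def f2 : (MvPolynomial (Fin 2) ℂ)[X] :=
  X^4 - C (MvPolynomial.X 0 * MvPolynomial.X 1) * X^3 +
    C ((MvPolynomial.X 0)^2 + (MvPolynomial.X 1)^2 - 3) * X^2 -
    C (MvPolynomial.X 0 * MvPolynomial.X 1) * X + 1

lemma f2_monic : f2.Monic := by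
  unfold f2
  monicity!

def phi : MvPolynomial (Fin 2) ℂ →+* ℂ[X] :=
  (MvPolynomial.aeval (fun i : Fin 2 => if i = 0 then (X : ℂ[X]) else 0)).toRingHom

lemma phi_X0 : phi (MvPolynomial.X 0) = X := by simp [phi]
lemma phi_X1 : phi (MvPolynomial.X 1) = 0 := by simp [phi]

lemma map_f2 : f2.map phi = gpoly := by
  unfold f2 gpoly
  simp only [Polynomial.map_add, Polynomial.map_sub, Polynomial.map_mul, Polynomial.map_pow,
    Polynomial.map_one, Polynomial.map_X, map_C, map_mul, map_add, map_sub, map_pow,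
    map_ofNat, Polynomial.map_ofNat, map_zero, phi_X0, phi_X1]
  ring

lemma f2_irred : Irreducible f2 :=
  f2_monic.irreducible_of_irreducible_map phi f2 (by rw [map_f2]; exact g_irred)

lemma key3 :
    (MvPolynomial.finSuccEquiv ℂ 2)
      ((MvPolynomial.renameEquiv ℂ (Equiv.swap (0 : Fin 3) 2))
        ((MvPolynomial.X 2) ^ 4 - MvPolynomial.X 0 * MvPolynomial.X 1 * (MvPolynomial.X 2) ^ 3 +
          ((MvPolynomial.X 0) ^ 2 + (MvPolynomial.X 1) ^ 2 - 3) * (MvPolynomial.X 2) ^ 2 -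
          MvPolynomial.X 0 * MvPolynomial.X 1 * MvPolynomial.X 2 + 1 :
          MvPolynomial (Fin 3) ℂ)) = f2 := by
  have h0 : (Equiv.swap (0 : Fin 3) 2) 0 = 2 := Equiv.swap_apply_left 0 2
  have h1 : (Equiv.swap (0 : Fin 3) 2) 1 = 1 := Equiv.swap_apply_of_ne_of_ne (by decide) (by decide)
  have h2 : (Equiv.swap (0 : Fin 3) 2) 2 = 0 := Equiv.swap_apply_right 0 2
  have e0 : (MvPolynomial.finSuccEquiv ℂ 2) (MvPolynomial.X 0) = Polynomial.X :=
    MvPolynomial.finSuccEquiv_X_zero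
  have e1 : (MvPolynomial.finSuccEquiv ℂ 2) (MvPolynomial.X 1) = Polynomial.C (MvPolynomial.X 0) := by
    rw [show (1 : Fin 3) = Fin.succ 0 from rfl, MvPolynomial.finSuccEquiv_X_succ]
  have e2 : (MvPolynomial.finSuccEquiv ℂ 2) (MvPolynomial.X 2) = Polynomial.C (MvPolynomial.X 1) := by
    rw [show (2 : Fin 3) = Fin.succ 1 from rfl, MvPolynomial.finSuccEquiv_X_succ]
  unfold f2
  simp only [MvPolynomial.renameEquiv_apply, map_add, map_sub, map_mul, map_pow, map_one,
    map_ofNat, MvPolynomial.rename_X, h0, h1, h2, e0, e1, e2]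
  ring

end
end Aux

open MvPolynomial

/-- The polynomial `p₁ = z⁴ − xyz³ + (x² + y² − 3)z² − xyz + 1` is irreducible in `ℂ[x,y,z]`. -/
theorem p1_irreducible :
    Irreducible ((X 2) ^ 4 - X 0 * X 1 * (X 2) ^ 3 +
      ((X 0) ^ 2 + (X 1) ^ 2 - 3) * (X 2) ^ 2 - X 0 * X 1 * X 2 + 1 :
      MvPolynomial (Fin 3) ℂ) := by
  rw [← MulEquiv.irreducible_iff (MvPolynomial.renameEquiv ℂ (Equiv.swap (0 : Fin 3) 2)),
    ← MulEquiv.irreducible_iff (MvPolynomial.finSuccEquiv ℂ 2), key3]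
  exact f2_irred
end

section
/- The polynomial r = x² + y² + z² − xyz − 3 is irreducible in the polynomial ring ℂ[x,y,z]. -/
open MvPolynomial

/-- The polynomial `r = x² + y² + z² − xyz − 3` is irreducible in `ℂ[x,y,z]`. -/
theorem r_irreducible :
    Irreducible ((X 0) ^ 2 + (X 1) ^ 2 + (X 2) ^ 2 - X 0 * X 1 * X 2 - 3 :
      MvPolynomial (Fin 3) ℂ) := by
  set x : MvPolynomial (Fin 2) ℂ := X 0 with hx
  set y : MvPolynomial (Fin 2) ℂ := X 1 with hy
  rw [← MulEquiv.irreducible_iff (MvPolynomial.finSuccEquiv ℂ 2)]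
  have h1 : (1 : Fin 3) = (0 : Fin 2).succ := rfl
  have h2 : (2 : Fin 3) = (1 : Fin 2).succ := rfl
  have hq : (MvPolynomial.finSuccEquiv ℂ 2)
      ((X 0) ^ 2 + (X 1) ^ 2 + (X 2) ^ 2 - X 0 * X 1 * X 2 - 3) =
      Polynomial.X ^ 2 + Polynomial.C (-(x * y)) * Polynomial.X
        + Polynomial.C (x ^ 2 + y ^ 2 - 3) := by
    rw [h1, h2]
    simp only [map_sub, map_add, map_pow, map_mul, map_ofNat,
      finSuccEquiv_X_zero, finSuccEquiv_X_succ, map_neg]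
    ring_nf
    simp only [hx, hy]
  rw [hq]
  set q : Polynomial (MvPolynomial (Fin 2) ℂ) :=
    Polynomial.X ^ 2 + Polynomial.C (-(x * y)) * Polynomial.X
      + Polynomial.C (x ^ 2 + y ^ 2 - 3) with hqdef
  have hmonic : q.Monic := by
    rw [hqdef, add_assoc]
    apply Polynomial.monic_X_pow_add
    calc Polynomial.degree (Polynomial.C (-(x * y)) * Polynomial.X
          + Polynomial.C (x ^ 2 + y ^ 2 - 3)) ≤ 1 := Polynomial.degree_linear_le
      _ < 2 := by norm_num
  have hdeg : q.natDegree = 2 := by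
    have : q = Polynomial.C 1 * Polynomial.X ^ 2 + Polynomial.C (-(x * y)) * Polynomial.X
        + Polynomial.C (x ^ 2 + y ^ 2 - 3) := by rw [hqdef]; simp
    rw [this]
    exact Polynomial.natDegree_quadratic one_ne_zero
  by_contra hirr
  obtain ⟨c₁, c₂, hmul, hadd⟩ :=
    (hmonic.not_irreducible_iff_exists_add_mul_eq_coeff hdeg).mp hirr
  have hc0 : q.coeff 0 = x ^ 2 + y ^ 2 - 3 := by
    simp only [hqdef, Polynomial.coeff_add, Polynomial.coeff_C_mul, Polynomial.coeff_X_pow,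
      Polynomial.coeff_X_zero, Polynomial.coeff_C_zero]
    norm_num
  have hc1 : q.coeff 1 = -(x * y) := by
    simp only [hqdef, Polynomial.coeff_add, Polynomial.coeff_C_mul, Polynomial.coeff_X_pow,
      Polynomial.coeff_X_one, Polynomial.coeff_C]
    norm_num
  rw [hc0] at hmul
  rw [hc1] at hadd
  -- push to single-variable polynomials via y ↦ 0, x ↦ X
  set ψ : MvPolynomial (Fin 2) ℂ →+* Polynomial ℂ :=
    (MvPolynomial.aeval ![Polynomial.X, 0] : MvPolynomial (Fin 2) ℂ →ₐ[ℂ] Polynomial ℂ).toRingHom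
      with hψ
  have hψx : ψ x = Polynomial.X := by simp [hψ, hx]
  have hψy : ψ y = 0 := by simp [hψ, hy]
  have e1 : ψ c₁ * ψ c₂ = Polynomial.X ^ 2 - 3 := by
    rw [← map_mul, ← hmul]; push_cast [map_sub, map_add, map_pow, hψx, hψy, map_ofNat]; ring
  have e2 : ψ c₁ + ψ c₂ = 0 := by
    rw [← map_add, ← hadd, map_neg, map_mul, hψx, hψy]; ring
  set d : Polynomial ℂ := ψ c₁ with hd
  have hsq : d ^ 2 = 3 - Polynomial.X ^ 2 := by
    have : ψ c₂ = -d := by linear_combination e2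
    rw [this] at e1
    linear_combination -e1
  -- now derive contradiction
  have hdne : d ≠ 0 := by
    intro h0
    rw [h0] at hsq
    have := congrArg (fun p => Polynomial.coeff p 2) hsq
    simp [Polynomial.coeff_X_pow] at this
  have hdd : d.natDegree = 1 := by
    have h2 : (d ^ 2).natDegree = 2 := by
      rw [hsq]
      compute_degree!
    rw [Polynomial.natDegree_pow] at h2
    omega
  have hrepr : d = Polynomial.C (d.coeff 1) * Polynomial.X + Polynomial.C (d.coeff 0) :=
    Polynomial.eq_X_add_C_of_degree_le_one
      (by rw [Polynomial.degree_eq_natDegree hdne, hdd]; exact le_refl _)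
  set a := d.coeff 1
  set b := d.coeff 0
  rw [hrepr] at hsq
  have hexp : (Polynomial.C a * Polynomial.X + Polynomial.C b) ^ 2 =
      Polynomial.C (a ^ 2) * Polynomial.X ^ 2 + Polynomial.C (2 * a * b) * Polynomial.X
        + Polynomial.C (b ^ 2) := by
    simp only [map_pow, map_mul, map_add, map_ofNat]
    ring
  rw [hexp, ← map_ofNat Polynomial.C 3] at hsq
  have ha : a ^ 2 = -1 := by
    have := congrArg (fun p => Polynomial.coeff p 2) hsq
    simp only [Polynomial.coeff_add, Polynomial.coeff_sub, Polynomial.coeff_C_mul,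
      Polynomial.coeff_X_pow, Polynomial.coeff_C, Polynomial.coeff_X] at this
    norm_num at this
    exact this
  have hab : a * b = 0 := by
    have := congrArg (fun p => Polynomial.coeff p 1) hsq
    simp only [Polynomial.coeff_add, Polynomial.coeff_sub, Polynomial.coeff_C_mul,
      Polynomial.coeff_X_pow, Polynomial.coeff_C, Polynomial.coeff_X] at this
    norm_num at this
    rcases this with h | h
    · exact mul_eq_zero_of_left h b
    · exact mul_eq_zero_of_right a h
  have hb : b ^ 2 = 3 := by
    have := congrArg (fun p => Polynomial.coeff p 0) hsq
    simp only [Polynomial.coeff_add, Polynomial.coeff_sub, Polynomial.coeff_C_mul,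
      Polynomial.coeff_X_pow, Polynomial.coeff_C, Polynomial.coeff_X] at this
    norm_num at this
    exact this
  have ha0 : a ≠ 0 := by
    intro h
    rw [h] at ha
    norm_num at ha
  have hb0 : b = 0 := by
    rcases mul_eq_zero.mp hab with h | h
    · exact absurd h ha0
    · exact h
  rw [hb0] at hb
  norm_num at hb
end

section
/- The affine surface V(p₀) ⊂ ℂ³ is smooth: for every (x,y,z) ∈ ℂ³ with p₀(x,y,z) = 0, the gradient (∂p₀/∂x, ∂p₀/∂y, ∂p₀/∂z)(x,y,z) = (−yz² + 2xz − y, −xz² + 2yz − x, 3z² − 2xyz + x² + y² − 2) is nonzero. -/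
/-- The affine surface `V(p₀)` is smooth: at every zero of
`p₀ = z³ − xyz² + (x² + y² − 2)z − xy` the gradient of `p₀` is nonzero. -/
theorem V_p0_smooth (x y z : ℂ)
    (h : z ^ 3 - x * y * z ^ 2 + (x ^ 2 + y ^ 2 - 2) * z - x * y = 0) :
    ¬ (-(y * z ^ 2) + 2 * x * z - y = 0 ∧
       -(x * z ^ 2) + 2 * y * z - x = 0 ∧
       3 * z ^ 2 - 2 * x * y * z + x ^ 2 + y ^ 2 - 2 = 0) := by
  rintro ⟨h1, h2, h3⟩
  have e1 : y * (z ^ 2 + 1) = 2 * x * z := by linear_combination -h1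
  have e2 : x * (z ^ 2 + 1) = 2 * y * z := by linear_combination -h2
  have key : x * y * (z ^ 2 - 1) ^ 2 = 0 := by
    linear_combination (x * (z ^ 2 + 1)) * e1 + (2 * x * z) * e2
  rcases mul_eq_zero.mp key with hxy | hsq
  · rcases mul_eq_zero.mp hxy with hx | hy
    · -- x = 0
      subst hx
      have hyz1 : y * (z ^ 2 + 1) = 0 := by linear_combination e1
      have hyz2 : y * z = 0 := by linear_combination -e2 / 2
      rcases mul_eq_zero.mp hyz1 with hy0 | hzz
      · subst hy0
        have hz0 : z = 0 := by linear_combination (z * h3 - 3 * h) / 4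
        have : (-2 : ℂ) = 0 := by linear_combination h3 - 3 * z * hz0
        norm_num at this
      · rcases mul_eq_zero.mp hyz2 with hy0 | hz0
        · subst hy0
          have hz0 : z = 0 := by linear_combination (z * h3 - 3 * h) / 4
          have : (-2 : ℂ) = 0 := by linear_combination h3 - 3 * z * hz0
          norm_num at this
        · have : (1 : ℂ) = 0 := by linear_combination hzz - z * hz0
          exact one_ne_zero this
    · -- y = 0
      subst hy
      have hxz1 : x * (z ^ 2 + 1) = 0 := by linear_combination e2
      have hxz2 : x * z = 0 := by linear_combination -e1 / 2
      rcases mul_eq_zero.mp hxz1 with hx0 | hzz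
      · subst hx0
        have hz0 : z = 0 := by linear_combination (z * h3 - 3 * h) / 4
        have : (-2 : ℂ) = 0 := by linear_combination h3 - 3 * z * hz0
        norm_num at this
      · rcases mul_eq_zero.mp hxz2 with hx0 | hz0
        · subst hx0
          have hz0 : z = 0 := by linear_combination (z * h3 - 3 * h) / 4
          have : (-2 : ℂ) = 0 := by linear_combination h3 - 3 * z * hz0
          norm_num at this
        · have : (1 : ℂ) = 0 := by linear_combination hzz - z * hz0
          exact one_ne_zero this
  · -- (z^2 - 1)^2 = 0
    have hz : z ^ 2 = 1 := by
      have h0 : z ^ 2 - 1 = 0 := pow_eq_zero_iff (two_ne_zero) |>.mp hsq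
      linear_combination h0
    have hy : y = x * z := by linear_combination e1 / 2 - y / 2 * hz
    have : (1 : ℂ) = 0 := by
      linear_combination h3 - (3 - x ^ 2) * hz - (y - x * z) * hy
    exact one_ne_zero this
end

section
/- The affine surface V(p₁) ⊂ ℂ³ is smooth: for every (x,y,z) ∈ ℂ³ with p₁(x,y,z) = 0, the gradient (∂p₁/∂x, ∂p₁/∂y, ∂p₁/∂z)(x,y,z) = (−yz³ + 2xz² − yz, −xz³ + 2yz² − xz, 4z³ − 3xyz² + 2(x² + y² − 3)z − xy) is nonzero. -/
/-- The affine surface `V(p₁)` is smooth: at every zero of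
`p₁ = z⁴ − xyz³ + (x² + y² − 3)z² − xyz + 1` the gradient of `p₁` is nonzero. -/
theorem V_p1_smooth (x y z : ℂ)
    (h : z ^ 4 - x * y * z ^ 3 + (x ^ 2 + y ^ 2 - 3) * z ^ 2 - x * y * z + 1 = 0) :
    ¬ (-(y * z ^ 3) + 2 * x * z ^ 2 - y * z = 0 ∧
       -(x * z ^ 3) + 2 * y * z ^ 2 - x * z = 0 ∧
       4 * z ^ 3 - 3 * x * y * z ^ 2 + 2 * (x ^ 2 + y ^ 2 - 3) * z - x * y = 0) := by
  rintro ⟨h1, h2, h3⟩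
  -- z ≠ 0 since p₁(x,y,0) = 1
  have hz : z ≠ 0 := by
    intro hz0
    rw [hz0] at h
    norm_num at h
  -- divide first two partials by z
  have e1 : 2 * x * z - y * (z ^ 2 + 1) = 0 := by
    rcases mul_eq_zero.mp (show z * (2 * x * z - y * (z ^ 2 + 1)) = 0 by
      linear_combination h1) with h' | h'
    · exact absurd h' hz
    · exact h'
  have e2 : 2 * y * z - x * (z ^ 2 + 1) = 0 := by
    rcases mul_eq_zero.mp (show z * (2 * y * z - x * (z ^ 2 + 1)) = 0 by
      linear_combination h2) with h' | h'
    · exact absurd h' hz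
    · exact h'
  have e3 : x * (z ^ 2 - 1) ^ 2 = 0 := by
    linear_combination (-(2 * z)) * e1 + (-(z ^ 2 + 1)) * e2
  have e4 : y * (z ^ 2 - 1) ^ 2 = 0 := by
    linear_combination (-(2 * z)) * e2 + (-(z ^ 2 + 1)) * e1
  -- case z² = 1 is impossible
  have hz1 : ¬ (z ^ 2 - 1 = 0) := by
    intro hzz
    have hy : y = x * z := by
      linear_combination (-(1 : ℂ) / 2) * e1 + (-y / 2) * hzz
    subst hy
    have : (-1 : ℂ) = 0 := by
      linear_combination h - (z ^ 2 - 2) * hzz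
    norm_num at this
  rcases mul_eq_zero.mp e3 with hx | hsq
  · rcases mul_eq_zero.mp e4 with hy | hsq
    · subst hx; subst hy
      -- h3 : 4z³ - 6z = 0, so 2z² = 3, but then p₁ = -5/4 ≠ 0
      have hz2 : 2 * z ^ 2 - 3 = 0 := by
        rcases mul_eq_zero.mp (show z * (2 * (2 * z ^ 2 - 3)) = 0 by
          linear_combination h3) with h' | h'
        · exact absurd h' hz
        · rcases mul_eq_zero.mp h' with h'' | h''
          · norm_num at h''
          · exact h''
      have : (-5 / 4 : ℂ) = 0 := by
        linear_combination h - (z ^ 2 / 2 - 3 / 4) * hz2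
      norm_num at this
    · exact hz1 (pow_eq_zero_iff (n := 2) (by norm_num) |>.mp hsq)
  · exact hz1 (pow_eq_zero_iff (n := 2) (by norm_num) |>.mp hsq)
end

section
/- The affine surface V(p₂) ⊂ ℂ³ is smooth: for every (x,y,z) ∈ ℂ³ with p₂(x,y,z) = 0, the gradient (∂p₂/∂x, ∂p₂/∂y, ∂p₂/∂z)(x,y,z) = (−yz² + 2xz − y, −xz² + 2yz − x, 3z² − 2xyz + x² + y² − 1) is nonzero. -/
/-- The affine surface `V(p₂)` is smooth: at every zero of
`p₂ = z³ − xyz² + (x² + y² − 1)z − xy` the gradient of `p₂` is nonzero. -/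
theorem V_p2_smooth (x y z : ℂ)
    (h : z ^ 3 - x * y * z ^ 2 + (x ^ 2 + y ^ 2 - 1) * z - x * y = 0) :
    ¬ (-(y * z ^ 2) + 2 * x * z - y = 0 ∧
       -(x * z ^ 2) + 2 * y * z - x = 0 ∧
       3 * z ^ 2 - 2 * x * y * z + x ^ 2 + y ^ 2 - 1 = 0) := by
  rintro ⟨h1, h2, h3⟩
  have e1 : (x - y) * (z + 1) ^ 2 = 0 := by linear_combination h1 - h2
  have e2 : (x + y) * (z - 1) ^ 2 = 0 := by linear_combination -h1 - h2
  rcases mul_eq_zero.1 e1 with hxy | hz1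
  · rcases mul_eq_zero.1 e2 with hxy2 | hz2
    · have hx : x = 0 := by linear_combination (hxy + hxy2) / 2
      have hy : y = 0 := by linear_combination (hxy2 - hxy) / 2
      subst hx; subst hy
      have hz0 : z = 0 := by linear_combination (z / 2) * h3 - (3 / 2) * h
      subst hz0
      norm_num at h3
    · have hz : z = 1 := by
        have h' := pow_eq_zero_iff (n := 2) (by norm_num) |>.1 hz2
        exact sub_eq_zero.1 h'
      subst hz
      have h2z : (2 : ℂ) = 0 := by linear_combination h3 - (x - y) * hxy
      norm_num at h2z
  · have hz : z = -1 := by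
      have h' := pow_eq_zero_iff (n := 2) (by norm_num) |>.1 hz1
      linear_combination h'
    subst hz
    rcases mul_eq_zero.1 e2 with hxy2 | hz2
    · have h2z : (2 : ℂ) = 0 := by linear_combination h3 - (x + y) * hxy2
      norm_num at h2z
    · norm_num at hz2
end

section
/- The projective cubic surface V₊(R) ⊂ ℙ³ defined by R := (x² + y² + z²)w + xyz − 3w³ is smooth: if (x,y,z,w) ∈ ℂ⁴ satisfies all four partial derivative equations 2xw + yz = 0, 2yw + xz = 0, 2zw + xy = 0, and x² + y² + z² − 9w² = 0, then (x,y,z,w) = (0,0,0,0). -/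
/-- The projective cubic surface `V₊(R)` with `R = (x² + y² + z²)w + xyz − 3w³` is smooth:
the four partial derivatives of `R` have no common zero besides the origin of `ℂ⁴`. -/
theorem cubic_R_smooth (x y z w : ℂ)
    (h1 : 2 * x * w + y * z = 0) (h2 : 2 * y * w + x * z = 0)
    (h3 : 2 * z * w + x * y = 0) (h4 : x ^ 2 + y ^ 2 + z ^ 2 - 9 * w ^ 2 = 0) :
    x = 0 ∧ y = 0 ∧ z = 0 ∧ w = 0 := by
  by_cases hw : w = 0
  · subst hw
    have hx : x = 0 := by
      have : x ^ 3 = 0 := by linear_combination x * h4 - y * h3 - z * h2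
      exact pow_eq_zero_iff (by norm_num) |>.mp this
    have hy : y = 0 := by
      have : y ^ 3 = 0 := by linear_combination y * h4 - x * h3 - z * h1
      exact pow_eq_zero_iff (by norm_num) |>.mp this
    have hz : z = 0 := by
      have : z ^ 3 = 0 := by linear_combination z * h4 - x * h2 - y * h1
      exact pow_eq_zero_iff (by norm_num) |>.mp this
    exact ⟨hx, hy, hz, rfl⟩
  · exfalso
    have e1 : w * (x ^ 2 - y ^ 2) = 0 := by
      linear_combination (x / 2) * h1 - (y / 2) * h2
    have e2 : w * (y ^ 2 - z ^ 2) = 0 := by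
      linear_combination (y / 2) * h2 - (z / 2) * h3
    have hA : x ^ 2 - y ^ 2 = 0 := by
      rcases mul_eq_zero.mp e1 with h | h
      · exact absurd h hw
      · exact h
    have hB : y ^ 2 - z ^ 2 = 0 := by
      rcases mul_eq_zero.mp e2 with h | h
      · exact absurd h hw
      · exact h
    have hC : x ^ 2 - 3 * w ^ 2 = 0 := by
      linear_combination (h4 + 2 * hA + hB) / 3
    have hw4 : w ^ 4 = 0 := by
      linear_combination (-(1/3)) * ((y * z - 2 * x * w) * h1 + (z ^ 2 + y ^ 2) * hA
        + y ^ 2 * hB - (x ^ 2 - w ^ 2) * hC) + ((z ^ 2 - x ^ 2) / 3) * hA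
    exact hw (pow_eq_zero_iff (by norm_num) |>.mp hw4)
end

section
/- The surface S₁ = V(F₁) ⊂ ℙ² × ℙ¹ has exactly six singular points, namely (1:0:0, 1:0), (0:1:0, 1:0), (1:0:0, 0:1), (0:1:0, 0:1), (1:1:0, 1:1), (1:−1:0, 1:−1). Precisely: for (x,y,u) ∈ ℂ³ ∖ {0} and (z,w) ∈ ℂ² ∖ {0}, all five partial derivatives ∂F₁/∂x, ∂F₁/∂y, ∂F₁/∂u, ∂F₁/∂z, ∂F₁/∂w vanish at (x,y,u,z,w) if and only if there exist nonzero scalars λ, μ ∈ ℂ such that (x,y,u) = λ·v and (z,w) = μ·p for one of the six pairs (v,p) ∈ {((1,0,0),(1,0)), ((0,1,0),(1,0)), ((1,0,0),(0,1)), ((0,1,0),(0,1)), ((1,1,0),(1,1)), ((1,−1,0),(1,−1))}. -/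
/-- The surface `S₁ = V(F₁) ⊂ ℙ² × ℙ¹`, with
`F₁ = u²z⁴ − xyz³w + (x² + y² − 3u²)z²w² − xyzw³ + u²w⁴`, has exactly six singular points:
`(1:0:0, 1:0)`, `(0:1:0, 1:0)`, `(1:0:0, 0:1)`, `(0:1:0, 0:1)`,
`(1:1:0, 1:1)`, `(1:−1:0, 1:−1)`. -/
theorem S1_singular_points (x y u z w : ℂ)
    (hxyu : (x, y, u) ≠ (0, 0, 0)) (hzw : (z, w) ≠ (0, 0)) :
    (-(y * z ^ 3 * w) + 2 * x * z ^ 2 * w ^ 2 - y * z * w ^ 3 = 0 ∧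
     -(x * z ^ 3 * w) + 2 * y * z ^ 2 * w ^ 2 - x * z * w ^ 3 = 0 ∧
     2 * u * z ^ 4 - 6 * u * z ^ 2 * w ^ 2 + 2 * u * w ^ 4 = 0 ∧
     4 * u ^ 2 * z ^ 3 - 3 * x * y * z ^ 2 * w +
       2 * (x ^ 2 + y ^ 2 - 3 * u ^ 2) * z * w ^ 2 - x * y * w ^ 3 = 0 ∧
     -(x * y * z ^ 3) + 2 * (x ^ 2 + y ^ 2 - 3 * u ^ 2) * z ^ 2 * w -
       3 * x * y * z * w ^ 2 + 4 * u ^ 2 * w ^ 3 = 0) ↔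
    (∃ l m : ℂ, l ≠ 0 ∧ m ≠ 0 ∧
      (((x, y, u) = (l * 1, l * 0, l * 0) ∧ (z, w) = (m * 1, m * 0)) ∨
       ((x, y, u) = (l * 0, l * 1, l * 0) ∧ (z, w) = (m * 1, m * 0)) ∨
       ((x, y, u) = (l * 1, l * 0, l * 0) ∧ (z, w) = (m * 0, m * 1)) ∨
       ((x, y, u) = (l * 0, l * 1, l * 0) ∧ (z, w) = (m * 0, m * 1)) ∨
       ((x, y, u) = (l * 1, l * 1, l * 0) ∧ (z, w) = (m * 1, m * 1)) ∨
       ((x, y, u) = (l * 1, l * (-1), l * 0) ∧ (z, w) = (m * 1, m * (-1))))) := by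
  have h0 : ∀ a b : ℂ, b ≠ 0 → a * b = 0 → a = 0 :=
    fun a b hb h => (mul_eq_zero.mp h).resolve_right hb
  constructor
  · rintro ⟨e1, e2, e3, e4, e5⟩
    by_cases hz : z = 0
    · subst hz
      have hw : w ≠ 0 := by simpa using hzw
      have hu : u = 0 := h0 u (w ^ 4) (pow_ne_zero _ hw) (by linear_combination e3 / 2)
      subst hu
      have hxy : x * y = 0 := h0 (x * y) (w ^ 3) (pow_ne_zero _ hw) (by linear_combination -e4)
      rcases mul_eq_zero.mp hxy with hx | hy
      · subst hx
        have hy : y ≠ 0 := by simpa using hxyu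
        exact ⟨y, w, hy, hw, Or.inr (Or.inr (Or.inr (Or.inl ⟨by simp, by simp⟩)))⟩
      · subst hy
        have hx : x ≠ 0 := by simpa using hxyu
        exact ⟨x, w, hx, hw, Or.inr (Or.inr (Or.inl ⟨by simp, by simp⟩))⟩
    · by_cases hw : w = 0
      · subst hw
        have hu : u = 0 := h0 u (z ^ 4) (pow_ne_zero _ hz) (by linear_combination e3 / 2)
        subst hu
        have hxy : x * y = 0 := h0 (x * y) (z ^ 3) (pow_ne_zero _ hz) (by linear_combination -e5)
        rcases mul_eq_zero.mp hxy with hx | hy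
        · subst hx
          have hy : y ≠ 0 := by simpa using hxyu
          exact ⟨y, z, hy, hz, Or.inr (Or.inl ⟨by simp, by simp⟩)⟩
        · subst hy
          have hx : x ≠ 0 := by simpa using hxyu
          exact ⟨x, z, hx, hz, Or.inl ⟨by simp, by simp⟩⟩
      · -- main case : z ≠ 0 and w ≠ 0
        have hA : 2 * x * z * w - y * (z ^ 2 + w ^ 2) = 0 :=
          h0 _ (z * w) (mul_ne_zero hz hw) (by linear_combination e1)
        have hB : 2 * y * z * w - x * (z ^ 2 + w ^ 2) = 0 :=
          h0 _ (z * w) (mul_ne_zero hz hw) (by linear_combination e2)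
        by_cases hzw2 : w = z
        · subst hzw2
          have hxy : y = x := sub_eq_zero.mp
            (h0 (y - x) (2 * w ^ 2)
              (mul_ne_zero two_ne_zero (pow_ne_zero _ hw)) (by linear_combination -hA))
          subst hxy
          have hu : u = 0 := h0 u (2 * w ^ 4)
            (mul_ne_zero two_ne_zero (pow_ne_zero _ hw)) (by linear_combination -e3)
          subst hu
          have hy : y ≠ 0 := by
            intro h
            exact hxyu (by simp [h])
          exact ⟨y, w, hy, hw,
            Or.inr (Or.inr (Or.inr (Or.inr (Or.inl ⟨by simp, by simp⟩))))⟩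
        · by_cases hzw3 : w = -z
          · subst hzw3
            have hxy : y = -x := sub_eq_zero.mp
              (h0 (y - -x) (2 * z ^ 2)
                (mul_ne_zero two_ne_zero (pow_ne_zero _ hz)) (by linear_combination -hA))
            subst hxy
            have hu : u = 0 := h0 u (2 * z ^ 4)
              (mul_ne_zero two_ne_zero (pow_ne_zero _ hz)) (by linear_combination -e3)
            subst hu
            have hx : x ≠ 0 := by
              intro h
              exact hxyu (by simp [h])
            exact ⟨x, z, hx, hz,
              Or.inr (Or.inr (Or.inr (Or.inr (Or.inr ⟨by simp, by simp⟩))))⟩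
          · -- w ≠ ±z : then x = y = 0, and the z,w-partials give a contradiction.
            exfalso
            have hzw2' : z - w ≠ 0 := fun h => hzw2 (by linear_combination -h)
            have hzw3' : z + w ≠ 0 := fun h => hzw3 (by linear_combination h)
            have hs : x + y = 0 :=
              h0 (x + y) ((z - w) ^ 2) (pow_ne_zero _ hzw2')
                (by linear_combination -hA - hB)
            have hd : x - y = 0 :=
              h0 (x - y) ((z + w) ^ 2) (pow_ne_zero _ hzw3')
                (by linear_combination hA - hB)
            have hx0 : x = 0 := by linear_combination (hs + hd) / 2
            have hy0 : y = 0 := by linear_combination (hs - hd) / 2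
            subst hx0; subst hy0
            have hu : u ≠ 0 := by simpa using hxyu
            have h1 : 2 * z ^ 2 - 3 * w ^ 2 = 0 :=
              h0 _ (2 * u ^ 2 * z)
                (mul_ne_zero (mul_ne_zero two_ne_zero (pow_ne_zero _ hu)) hz)
                (by linear_combination e4)
            have h2 : 2 * w ^ 2 - 3 * z ^ 2 = 0 :=
              h0 _ (2 * u ^ 2 * w)
                (mul_ne_zero (mul_ne_zero two_ne_zero (pow_ne_zero _ hu)) hw)
                (by linear_combination e5)
            have hz2 : z ^ 2 = 0 := by
              linear_combination (-(2 : ℂ) / 5) * h1 - (3 / 5) * h2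
            exact hz ((pow_eq_zero_iff two_ne_zero).mp hz2)
  · rintro ⟨l, m, hl, hm, h⟩
    rcases h with ⟨h1, h2⟩ | ⟨h1, h2⟩ | ⟨h1, h2⟩ | ⟨h1, h2⟩ | ⟨h1, h2⟩ | ⟨h1, h2⟩ <;>
    · simp only [Prod.mk.injEq] at h1 h2
      obtain ⟨hx, hy, hu⟩ := h1
      obtain ⟨hz1, hw1⟩ := h2
      subst hx; subst hy; subst hu; subst hz1; subst hw1
      exact ⟨by ring, by ring, by ring, by ring, by ring⟩
end

section
/- The conic bundle φ₁ : S₁ → ℙ¹ has exactly eight degenerate fibers, located at (z:w) = (1:0), (0:1), (1:1), (1:−1), (1:(√5+1)/2), (1:(√5−1)/2), (1:−(√5+1)/2), (1:−(√5−1)/2). Precisely: for (z₀,w₀) ∈ ℂ² ∖ {0}, there exists a nonzero (x,y,u) ∈ ℂ³ at which the three partial derivatives ∂F₁/∂x, ∂F₁/∂y, ∂F₁/∂u all vanish at (x,y,u,z₀,w₀) if and only if z₀·w₀·(z₀² − w₀²)·(z₀⁴ − 3z₀²w₀² + w₀⁴) = 0. -/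
/-- The conic bundle `φ₁ : S₁ → ℙ¹` (with
`F₁ = u²z⁴ − xyz³w + (x² + y² − 3u²)z²w² − xyzw³ + u²w⁴`) has exactly eight degenerate
fibers, at `(z:w) = (1:0), (0:1), (1:±1), (1:±(√5±1)/2)`: the fiber over `(z₀:w₀)` is
degenerate iff `z₀w₀(z₀² − w₀²)(z₀⁴ − 3z₀²w₀² + w₀⁴) = 0`. -/
theorem S1_degenerate_fibers (z₀ w₀ : ℂ) (hzw : (z₀, w₀) ≠ (0, 0)) :
    (∃ x y u : ℂ, (x, y, u) ≠ (0, 0, 0) ∧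
      -(y * z₀ ^ 3 * w₀) + 2 * x * z₀ ^ 2 * w₀ ^ 2 - y * z₀ * w₀ ^ 3 = 0 ∧
      -(x * z₀ ^ 3 * w₀) + 2 * y * z₀ ^ 2 * w₀ ^ 2 - x * z₀ * w₀ ^ 3 = 0 ∧
      2 * u * z₀ ^ 4 - 6 * u * z₀ ^ 2 * w₀ ^ 2 + 2 * u * w₀ ^ 4 = 0) ↔
    z₀ * w₀ * (z₀ ^ 2 - w₀ ^ 2) * (z₀ ^ 4 - 3 * z₀ ^ 2 * w₀ ^ 2 + w₀ ^ 4) = 0 := by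
  constructor
  · rintro ⟨x, y, u, hne, h1, h2, h3⟩
    by_contra hP
    simp only [mul_eq_zero, not_or] at hP
    obtain ⟨⟨⟨hz, hw⟩, hd⟩, hq⟩ := hP
    have hu : u = 0 := by
      have h : u * (z₀ ^ 4 - 3 * z₀ ^ 2 * w₀ ^ 2 + w₀ ^ 4) = 0 := by
        linear_combination h3 / 2
      exact (mul_eq_zero.mp h).resolve_right hq
    have hzw1 : z₀ - w₀ ≠ 0 := by
      intro h
      apply hd
      have : z₀ = w₀ := sub_eq_zero.mp h
      rw [this]; ring
    have hzw2 : z₀ + w₀ ≠ 0 := by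
      intro h
      apply hd
      have : z₀ = -w₀ := by linear_combination h
      rw [this]; ring
    have h4 : (x + y) * (z₀ * (w₀ * ((z₀ - w₀) * (z₀ - w₀)))) = 0 := by
      linear_combination -h1 - h2
    have h5 : (x - y) * (z₀ * (w₀ * ((z₀ + w₀) * (z₀ + w₀)))) = 0 := by
      linear_combination h1 - h2
    have hxy1 : x + y = 0 := by
      rcases mul_eq_zero.mp h4 with h | h
      · exact h
      · exact absurd h (by
          exact mul_ne_zero hz (mul_ne_zero hw (mul_ne_zero hzw1 hzw1)))
    have hxy2 : x - y = 0 := by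
      rcases mul_eq_zero.mp h5 with h | h
      · exact h
      · exact absurd h (by
          exact mul_ne_zero hz (mul_ne_zero hw (mul_ne_zero hzw2 hzw2)))
    have hx : x = 0 := by linear_combination (hxy1 + hxy2) / 2
    have hy : y = 0 := by linear_combination (hxy1 - hxy2) / 2
    exact hne (by rw [hx, hy, hu])
  · intro hP
    rcases mul_eq_zero.mp hP with hP | hq
    · rcases mul_eq_zero.mp hP with hP | hd
      · rcases mul_eq_zero.mp hP with hz | hw
        · exact ⟨1, 0, 0, by simp, by rw [hz]; ring, by rw [hz]; ring, by rw [hz]; ring⟩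
        · exact ⟨1, 0, 0, by simp, by rw [hw]; ring, by rw [hw]; ring, by rw [hw]; ring⟩
      · refine ⟨z₀, w₀, 0, ?_, ?_, ?_, by ring⟩
        · intro h
          apply hzw
          have h1 : z₀ = 0 := congrArg Prod.fst h
          have h2 : w₀ = 0 := congrArg Prod.fst (congrArg Prod.snd h)
          rw [h1, h2]
        · linear_combination (z₀ * w₀ ^ 2) * hd
        · linear_combination (-(z₀ ^ 2) * w₀) * hd
    · exact ⟨0, 0, 1, by simp, by ring, by ring, by linear_combination 2 * hq⟩
end

section
/- Let α := (−1 + √−7)/2 ∈ ℂ (so α² + α + 2 = 0), and let A = [[1,1],[0,1]] and B = [[1,0],[α,1]] in SL₂(ℂ). Set W := B·A·B⁻¹·A⁻¹·B·A·B·A⁻¹·B⁻¹·A·B (the image of the word w = baBAbabABab). Then: (i) A·W = W·A, so a ↦ A, b ↦ B defines a representation of the link group ⟨a, b | awa⁻¹w⁻¹ = 1⟩ of 6²₃ into SL₂(ℂ); (ii) tr(A) = 2, tr(B) = 2, and tr(A·B) = 2 + α; (iii) the character point (x,y,z) = (2, 2, 2+α) satisfies p₂(2, 2, 2+α) = 0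 but r(2, 2, 2+α) ≠ 0; hence the holonomy character of 6²₃ lies on the component V(p₂) and not on V(r). -/
open Matrix

/-- The holonomy representation of the link `6²₃`: with `α = (−1 + √−7)/2`,
`A = [[1,1],[0,1]]`, `B = [[1,0],[α,1]]` and
`W = B·A·B⁻¹·A⁻¹·B·A·B·A⁻¹·B⁻¹·A·B` (the image of `w = baBAbabABab`):
(i) `A·W = W·A`, so `a ↦ A`, `b ↦ B` defines a representation of
`⟨a, b | awa⁻¹w⁻¹⟩` into `SL₂(ℂ)`;
(ii) `tr A = 2`, `tr B = 2`, `tr (A·B) = 2 + α`;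
(iii) the character point `(2, 2, 2 + α)` satisfies `p₂(2,2,2+α) = 0` and
`r(2,2,2+α) ≠ 0`, hence the holonomy character lies on `V(p₂)` and not on `V(r)`. -/
theorem holonomy_623 (α : ℂ) (hα : α = (-1 + Complex.I * Real.sqrt 7) / 2)
    (A B W : Matrix (Fin 2) (Fin 2) ℂ)
    (hA : A = !![1, 1; 0, 1]) (hB : B = !![1, 0; α, 1])
    (hW : W = B * A * B⁻¹ * A⁻¹ * B * A * B * A⁻¹ * B⁻¹ * A * B) :
    α ^ 2 + α + 2 = 0 ∧
    A * W = W * A ∧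
    Matrix.trace A = 2 ∧ Matrix.trace B = 2 ∧ Matrix.trace (A * B) = 2 + α ∧
    (2 + α) ^ 3 - 2 * 2 * (2 + α) ^ 2 +
      ((2 : ℂ) ^ 2 + 2 ^ 2 - 1) * (2 + α) - 2 * 2 = 0 ∧
    (2 : ℂ) ^ 2 + 2 ^ 2 + (2 + α) ^ 2 - 2 * 2 * (2 + α) - 3 ≠ 0 := by
  have h7 : ((Real.sqrt 7 : ℝ) : ℂ) ^ 2 = 7 := by
    norm_cast
    rw [Real.sq_sqrt] <;> norm_num
  have hα2 : α ^ 2 + α + 2 = 0 := by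
    rw [hα]
    linear_combination (((Real.sqrt 7 : ℝ) : ℂ) ^ 2 / 4) * Complex.I_sq - (1/4) * h7
  have hαne : α ≠ -1 := by
    intro h
    rw [h] at hα2
    norm_num at hα2
  have hAinv : A⁻¹ = !![1, -1; 0, 1] := by
    apply Matrix.inv_eq_right_inv
    rw [hA, Matrix.one_fin_two]
    norm_num [Matrix.mul_fin_two]
  have hBinv : B⁻¹ = !![1, 0; -α, 1] := by
    apply Matrix.inv_eq_right_inv
    rw [hB, Matrix.one_fin_two]
    norm_num [Matrix.mul_fin_two]
  refine ⟨hα2, ?_, ?_, ?_, ?_, ?_, ?_⟩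
  ·
    have s1 : (!![1, 0; α, 1] : Matrix (Fin 2) (Fin 2) ℂ) * !![(1:ℂ), 1; 0, 1] = !![1, 1; α, 1 + α] := by
      rw [Matrix.mul_fin_two]; ext i j; fin_cases i <;> fin_cases j <;> simp <;> ring
    have s2 : (!![1, 1; α, 1 + α] : Matrix (Fin 2) (Fin 2) ℂ) * !![(1:ℂ), 0; -α, 1] = !![1 + -1*α, 1; -1*α^2, 1 + α] := by
      rw [Matrix.mul_fin_two]; ext i j; fin_cases i <;> fin_cases j <;> simp <;> ring
    have s3 : (!![1 + -1*α, 1; -1*α^2, 1 + α] : Matrix (Fin 2) (Fin 2) ℂ) * !![(1:ℂ), -1; 0, 1] = !![1 + -1*α, α; -1*α^2, 1 + α + α^2] := by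
      rw [Matrix.mul_fin_two]; ext i j; fin_cases i <;> fin_cases j <;> simp <;> ring
    have s4 : (!![1 + -1*α, α; -1*α^2, 1 + α + α^2] : Matrix (Fin 2) (Fin 2) ℂ) * !![(1:ℂ), 0; α, 1] = !![1 + -1*α + α^2, α; α + α^3, 1 + α + α^2] := by
      rw [Matrix.mul_fin_two]; ext i j; fin_cases i <;> fin_cases j <;> simp <;> ring
    have s5 : (!![1 + -1*α + α^2, α; α + α^3, 1 + α + α^2] : Matrix (Fin 2) (Fin 2) ℂ) * !![(1:ℂ), 1; 0, 1] = !![1 + -1*α + α^2, 1 + α^2; α + α^3, 1 + 2*α + α^2 + α^3] := by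
      rw [Matrix.mul_fin_two]; ext i j; fin_cases i <;> fin_cases j <;> simp <;> ring
    have s6 : (!![1 + -1*α + α^2, 1 + α^2; α + α^3, 1 + 2*α + α^2 + α^3] : Matrix (Fin 2) (Fin 2) ℂ) * !![(1:ℂ), 0; α, 1] = !![1 + α^2 + α^3, 1 + α^2; 2*α + 2*α^2 + 2*α^3 + α^4, 1 + 2*α + α^2 + α^3] := by
      rw [Matrix.mul_fin_two]; ext i j; fin_cases i <;> fin_cases j <;> simp <;> ring
    have s7 : (!![1 + α^2 + α^3, 1 + α^2; 2*α + 2*α^2 + 2*α^3 + α^4, 1 + 2*α + α^2 + α^3] : Matrix (Fin 2) (Fin 2) ℂ) * !![(1:ℂ), -1; 0, 1] = !![1 + α^2 + α^3, -1*α^3; 2*α + 2*α^2 + 2*α^3 + α^4, 1 + -1*α^2 + -1*α^3 + -1*α^4] := by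
      rw [Matrix.mul_fin_two]; ext i j; fin_cases i <;> fin_cases j <;> simp <;> ring
    have s8 : (!![1 + α^2 + α^3, -1*α^3; 2*α + 2*α^2 + 2*α^3 + α^4, 1 + -1*α^2 + -1*α^3 + -1*α^4] : Matrix (Fin 2) (Fin 2) ℂ) * !![(1:ℂ), 0; -α, 1] = !![1 + α^2 + α^3 + α^4, -1*α^3; α + 2*α^2 + 3*α^3 + 2*α^4 + α^5, 1 + -1*α^2 + -1*α^3 + -1*α^4] := by
      rw [Matrix.mul_fin_two]; ext i j; fin_cases i <;> fin_cases j <;> simp <;> ring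
    have s9 : (!![1 + α^2 + α^3 + α^4, -1*α^3; α + 2*α^2 + 3*α^3 + 2*α^4 + α^5, 1 + -1*α^2 + -1*α^3 + -1*α^4] : Matrix (Fin 2) (Fin 2) ℂ) * !![(1:ℂ), 1; 0, 1] = !![1 + α^2 + α^3 + α^4, 1 + α^2 + α^4; α + 2*α^2 + 3*α^3 + 2*α^4 + α^5, 1 + α + α^2 + 2*α^3 + α^4 + α^5] := by
      rw [Matrix.mul_fin_two]; ext i j; fin_cases i <;> fin_cases j <;> simp <;> ring
    have s10 : (!![1 + α^2 + α^3 + α^4, 1 + α^2 + α^4; α + 2*α^2 + 3*α^3 + 2*α^4 + α^5, 1 + α + α^2 + 2*α^3 + α^4 + α^5] : Matrix (Fin 2) (Fin 2) ℂ) * !![(1:ℂ), 0; α, 1] = !![1 + α + α^2 + 2*α^3 + α^4 + α^5, 1 + α^2 + α^4; 2*α + 3*α^2 + 4*α^3 + 4*α^4 + 2*α^5 + α^6, 1 + α + α^2 + 2*α^3 + α^4 + α^5] := by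
      rw [Matrix.mul_fin_two]; ext i j; fin_cases i <;> fin_cases j <;> simp <;> ring
    have hWmat : W = !![1 + α + α^2 + 2*α^3 + α^4 + α^5, 1 + α^2 + α^4; 2*α + 3*α^2 + 4*α^3 + 4*α^4 + 2*α^5 + α^6, 1 + α + α^2 + 2*α^3 + α^4 + α^5] := by
      rw [hW, hAinv, hBinv, hA, hB]
      rw [s1, s2, s3, s4, s5, s6, s7, s8, s9, s10]
    rw [hWmat, hA, Matrix.mul_fin_two, Matrix.mul_fin_two]
    ext i j
    fin_cases i <;> fin_cases j <;> simp <;>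
      first
        | linear_combination (0:ℂ) * hα2
        | linear_combination (α^4 + α^3 + α^2 + α) * hα2
        | linear_combination (-α^4 - α^3 - α^2 - α) * hα2
  · rw [hA, Matrix.trace_fin_two]; norm_num
  · rw [hB, Matrix.trace_fin_two]; norm_num
  · rw [hA, hB, Matrix.mul_fin_two, Matrix.trace_fin_two]
    simp
    ring
  · linear_combination (α + 1) * hα2
  · intro h
    apply hαne
    linear_combination hα2 - h
end
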